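/- Let Z = W be the 2×2 nilpotent Jordan block (with 1 in the (1,2) entry and 0 elsewhere), scaled by any t with 0 < t < 1 so that ‖Z‖ < 1 and ZW = WZ = 0. For the polynomial f(z,w) = z + w, one has ‖f(Z,W)‖ = 2t, while the supremum of |z + w| over the cross {(z,w) ∈ 𝔻² : zw = 0} equals 1. Hence the spectral constant of the quantum cross is at least 2. -/

import Mathlib

set_option synthInstance.maxHeartbeats 1000000
set_option maxHeartbeats 1000000

noncomputable def Jc : EuclideanSpace ℂ (Fin 2) →L[ℂ] EuclideanSpace ℂ (Fin 2) :=
  Matrix.toEuclideanCLM (𝕜 := ℂ) (Matrix.of ![![0, 1], ![0, 0]])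

lemma Japp (x : EuclideanSpace ℂ (Fin 2)) :
    Jc x = (WithLp.equiv 2 (Fin 2 → ℂ)).symm ![x 1, 0] := by
  have h : WithLp.equiv 2 (Fin 2 → ℂ) (Matrix.toEuclideanCLM (𝕜 := ℂ) (Matrix.of ![![0, 1], ![0, 0]]) x) =
      Matrix.mulVec (Matrix.of ![![0, 1], ![0, 0]]) (WithLp.equiv 2 (Fin 2 → ℂ) x) :=
    Matrix.ofLp_toEuclideanCLM (𝕜 := ℂ) (Matrix.of ![![0, 1], ![0, 0]]) x
  apply (WithLp.equiv 2 (Fin 2 → ℂ)).injective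
  rw [show Matrix.toEuclideanCLM (𝕜 := ℂ) (Matrix.of ![![0, 1], ![0, 0]]) x = Jc x from rfl] at h
  rw [h]
  funext i
  fin_cases i <;>
    simp [Matrix.toLin'_apply, Matrix.mulVec, dotProduct, Fin.sum_univ_two, Matrix.vecHead, Matrix.vecTail]

lemma Jnorm : ‖Jc‖ = 1 := by
  have hle : ‖Jc‖ ≤ 1 := by
    refine ContinuousLinearMap.opNorm_le_bound _ zero_le_one fun x => ?_
    rw [one_mul, Japp, EuclideanSpace.norm_eq, EuclideanSpace.norm_eq]
    apply Real.sqrt_le_sqrt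
    simp [Fin.sum_univ_two]
  have hge : (1 : ℝ) ≤ ‖Jc‖ := by
    have := Jc.le_opNorm (EuclideanSpace.single 1 (1 : ℂ))
    rw [Japp] at this
    simp [EuclideanSpace.norm_eq, Fin.sum_univ_two] at this
    simpa using this
  linarith

lemma Jsq : Jc * Jc = 0 := by
  ext x i
  simp only [ContinuousLinearMap.mul_apply, Japp, ContinuousLinearMap.zero_apply]
  fin_cases i <;> simp

lemma crossSup :
    sSup {x : ℝ | ∃ z w : ℂ, ‖z‖ < 1 ∧ ‖w‖ < 1 ∧ z * w = 0 ∧ x = ‖z + w‖} = 1 := by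
  set S := {x : ℝ | ∃ z w : ℂ, ‖z‖ < 1 ∧ ‖w‖ < 1 ∧ z * w = 0 ∧ x = ‖z + w‖}
  have hmem : ∀ r : ℝ, 0 ≤ r → r < 1 → r ∈ S := by
    intro r hr0 hr1
    refine ⟨(r : ℂ), 0, ?_, by simp, by simp, by simp [abs_of_nonneg hr0]⟩
    simpa [Complex.norm_real, abs_of_nonneg hr0] using hr1
  have hub : ∀ x ∈ S, x ≤ 1 := by
    rintro x ⟨z, w, hz, hw, hzw, rfl⟩
    rcases mul_eq_zero.mp hzw with h | h <;> subst h <;> simpa using by first | exact hw.le | exact hz.le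
  refine le_antisymm (Real.sSup_le hub (by linarith)) ?_
  have hbdd : BddAbove S := ⟨1, hub⟩
  refine le_of_forall_lt_imp_le_of_dense fun c hc => ?_
  rcases le_or_gt c 0 with h | h
  · exact h.trans (le_csSup hbdd (hmem 0 le_rfl one_pos))
  · exact le_csSup hbdd (hmem c h.le hc)

lemma clm_norm_smul (c : ℂ) (A : EuclideanSpace ℂ (Fin 2) →L[ℂ] EuclideanSpace ℂ (Fin 2)) :
    ‖c • A‖ = ‖c‖ * ‖A‖ := by
  with_unfolding_all exact norm_smul (α := ℂ) (β := EuclideanSpace ℂ (Fin 2) →L[ℂ] EuclideanSpace ℂ (Fin 2)) c A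

lemma clm_smul_zero (c : ℂ) :
    c • (0 : EuclideanSpace ℂ (Fin 2) →L[ℂ] EuclideanSpace ℂ (Fin 2)) = 0 := by
  ext x
  simp

/-- With `Z = W = t • J` where `J` is the 2×2 nilpotent Jordan block and
`0 < t < 1`, one has `‖Z‖ < 1`, `ZW = WZ = 0`, `‖f(Z,W)‖ = ‖Z + W‖ = 2t` for
`f(z,w) = z + w`, while the supremum of `|z + w|` over the cross
`{(z,w) ∈ 𝔻² : zw = 0}` equals `1`; hence the spectral constant of the quantum cross
(the sup over such pairs of the ratio) is at least `2`. -/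
theorem stmt0 (t : ℝ) (ht0 : 0 < t) (ht1 : t < 1) :
    ∀ Z W : EuclideanSpace ℂ (Fin 2) →L[ℂ] EuclideanSpace ℂ (Fin 2),
      Z = (t : ℂ) • Matrix.toEuclideanCLM (𝕜 := ℂ) (Matrix.of ![![0, 1], ![0, 0]]) →
      W = Z →
      (‖Z‖ < 1 ∧ ‖W‖ < 1 ∧ Z * W = 0 ∧ W * Z = 0 ∧
      ‖Z + W‖ = 2 * t ∧
      sSup {x : ℝ | ∃ z w : ℂ, ‖z‖ < 1 ∧ ‖w‖ < 1 ∧ z * w = 0 ∧ x = ‖z + w‖} = 1 ∧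
      ‖Z + W‖ /
        sSup {x : ℝ | ∃ z w : ℂ, ‖z‖ < 1 ∧ ‖w‖ < 1 ∧ z * w = 0 ∧ x = ‖z + w‖}
        = 2 * t) := by
  intro Z W hZ hW
  have hJ : Matrix.toEuclideanCLM (𝕜 := ℂ) (Matrix.of ![![0, 1], ![0, 0]]) = Jc := rfl
  subst hW
  rw [hJ] at hZ
  subst hZ
  have hnorm : ‖(t : ℂ) • Jc‖ = t := by
    rw [clm_norm_smul, Jnorm, mul_one, Complex.norm_real, Real.norm_eq_abs, abs_of_pos ht0]
  have hmul : ((t : ℂ) • Jc) * ((t : ℂ) • Jc) = 0 := by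
    rw [smul_mul_smul_comm, Jsq, clm_smul_zero]
  have hsum : ‖(t : ℂ) • Jc + (t : ℂ) • Jc‖ = 2 * t := by
    rw [← two_smul ℂ, smul_smul]
    rw [clm_norm_smul, Jnorm, mul_one]
    have : ((2:ℂ) * t) = ((2*t : ℝ) : ℂ) := by push_cast; ring
    rw [this, Complex.norm_real, Real.norm_eq_abs, abs_of_pos (by linarith)]
  exact ⟨by rw [hnorm]; exact ht1, by rw [hnorm]; exact ht1, hmul, hmul, hsum, crossSup, by rw [crossSup, div_one, hsum]⟩
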